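/- Let α = {α_n}_{n≥1} ⊂ (0,1) be a sequence of ratios with associated generalized Cantor set C ⊂ [0,1], let l_n denote the common length of the 2^{n-1} open intervals removed at stage n, and let I = [0,1] \ C. If there exists δ ∈ (0,1) such that ∑_{n=1}^∞ l_n^{1/4^{n/δ}} < ∞, then there exists a constant λ > 0 such that for every ξ ≠ 0, |(χ_I)^(ξ)|² ≤ λ·(1 + (log(1+|ξ|))^δ)/|ξ|², where (χ_I)^ is the Fourier transform of the indicator function of I. -/

import Mathlib

open MeasureTheory

/-- Length of each of the `2^n` closed intervals making up the `n`-th stage `Cₙ`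
of the generalized Cantor construction with ratios `α` (indexed from `0`,
so `α n` is the ratio `α_{n+1}` of the paper). -/
noncomputable def stageLen (α : ℕ → ℝ) : ℕ → ℝ
  | 0 => 1
  | n + 1 => stageLen α n * (1 - α n) / 2

/-- Left endpoints of the `2^n` closed intervals making up the `n`-th stage,
indexed by `b : Fin n → Bool` (`false` = left child, `true` = right child). -/
noncomputable def leftPt (α : ℕ → ℝ) : (n : ℕ) → (Fin n → Bool) → ℝ
  | 0, _ => 0
  | n + 1, b =>
      leftPt α n (fun i => b i.castSucc) +
        (if b (Fin.last n) then stageLen α n - stageLen α (n + 1) else 0)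

/-- The `n`-th stage `Cₙ` of the generalized Cantor construction: `C₀ = [0,1]`,
and `C_{n+1}` is obtained from `Cₙ` by removing the open middle `α_{n+1}`-th
of each of its `2^n` component closed intervals. -/
noncomputable def cantorStage (α : ℕ → ℝ) (n : ℕ) : Set ℝ :=
  ⋃ b : Fin n → Bool, Set.Icc (leftPt α n b) (leftPt α n b + stageLen α n)

/-- The generalized Cantor set `C = ⋂ₙ Cₙ` associated with the ratios `α`. -/
noncomputable def gCantorSet (α : ℕ → ℝ) : Set ℝ :=
  ⋂ n, cantorStage α n

/-- The common length of the `2^n` open intervals removed when passing from `Cₙ`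
to `C_{n+1}`; this is the quantity `l_{n+1}` of the paper. -/
noncomputable def removedLen (α : ℕ → ℝ) (n : ℕ) : ℝ :=
  stageLen α n * α n

variable {α : ℕ → ℝ}

lemma stageLen_pos (hα : ∀ n, α n ∈ Set.Ioo (0:ℝ) 1) (n : ℕ) : 0 < stageLen α n := by
  induction n with
  | zero => norm_num [stageLen]
  | succ n ih =>
    have h := hα n
    simp only [stageLen]
    have : 0 < 1 - α n := by linarith [h.2]
    positivity

lemma two_stageLen_succ_lt (hα : ∀ n, α n ∈ Set.Ioo (0:ℝ) 1) (n : ℕ) :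
    2 * stageLen α (n + 1) < stageLen α n := by
  have h := hα n
  have hp := stageLen_pos hα n
  simp only [stageLen]
  have h1 : stageLen α n * (1 - α n) < stageLen α n * 1 := by
    apply mul_lt_mul_of_pos_left _ hp; linarith [h.1]
  nlinarith

lemma stageLen_succ_le (hα : ∀ n, α n ∈ Set.Ioo (0:ℝ) 1) (n : ℕ) :
    stageLen α (n + 1) ≤ stageLen α n := by
  have := two_stageLen_succ_lt hα n
  have := stageLen_pos hα (n + 1)
  linarith

lemma leftPt_false {n : ℕ} {b : Fin (n+1) → Bool} (h : b (Fin.last n) = false) :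
    leftPt α (n+1) b = leftPt α n (fun i => b i.castSucc) := by
  simp [leftPt, h]

lemma leftPt_true {n : ℕ} {b : Fin (n+1) → Bool} (h : b (Fin.last n) = true) :
    leftPt α (n+1) b = leftPt α n (fun i => b i.castSucc) + (stageLen α n - stageLen α (n+1)) := by
  simp [leftPt, h]

lemma child_subset (hα : ∀ n, α n ∈ Set.Ioo (0:ℝ) 1) {n : ℕ} (b : Fin (n+1) → Bool) :
    Set.Icc (leftPt α (n+1) b) (leftPt α (n+1) b + stageLen α (n+1)) ⊆
      Set.Icc (leftPt α n (fun i => b i.castSucc))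
        (leftPt α n (fun i => b i.castSucc) + stageLen α n) := by
  have h1 := stageLen_succ_le hα n
  have h2 := stageLen_pos hα (n+1)
  cases hb : b (Fin.last n) with
  | false => rw [leftPt_false hb]; apply Set.Icc_subset_Icc <;> linarith
  | true => rw [leftPt_true hb]; apply Set.Icc_subset_Icc <;> linarith

lemma pairwise_disjoint_intervals (hα : ∀ n, α n ∈ Set.Ioo (0:ℝ) 1) :
    ∀ (n : ℕ) (b b' : Fin n → Bool), b ≠ b' →
      Disjoint (Set.Icc (leftPt α n b) (leftPt α n b + stageLen α n))
        (Set.Icc (leftPt α n b') (leftPt α n b' + stageLen α n)) := by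
  intro n
  induction n with
  | zero => intro b b' h; exact absurd (Subsingleton.elim b b') h
  | succ n ih =>
    have key : ∀ b b' : Fin (n+1) → Bool, (fun i : Fin n => b i.castSucc) = (fun i : Fin n => b' i.castSucc) →
        b (Fin.last n) = false → b' (Fin.last n) = true →
        Disjoint (Set.Icc (leftPt α (n+1) b) (leftPt α (n+1) b + stageLen α (n+1)))
          (Set.Icc (leftPt α (n+1) b') (leftPt α (n+1) b' + stageLen α (n+1))) := by
      intro b b' hr hb hb'
      rw [leftPt_false hb, leftPt_true hb', ← hr]
      have := two_stageLen_succ_lt hα n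
      rw [Set.disjoint_left]
      rintro x ⟨_, h2⟩ ⟨h3, _⟩
      linarith
    intro b b' h
    by_cases hr : (fun i : Fin n => b i.castSucc) = (fun i : Fin n => b' i.castSucc)
    · have hlast : b (Fin.last n) ≠ b' (Fin.last n) := by
        intro he
        apply h
        funext i
        induction i using Fin.lastCases with
        | last => exact he
        | cast i => exact congrFun hr i
      cases hb : b (Fin.last n) with
      | false => exact key b b' hr hb (by revert hlast; rw [hb]; cases b' (Fin.last n) <;> simp)
      | true =>
        exact (key b' b hr.symm (by revert hlast; rw [hb]; cases b' (Fin.last n) <;> simp) hb).symm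
    · exact Set.disjoint_of_subset (child_subset hα b) (child_subset hα b') (ih _ _ hr)

lemma cantorStage_succ_subset (hα : ∀ n, α n ∈ Set.Ioo (0:ℝ) 1) (n : ℕ) :
    cantorStage α (n+1) ⊆ cantorStage α n := by
  apply Set.iUnion_subset
  intro b
  exact (child_subset hα b).trans (Set.subset_iUnion_of_subset (fun i => b i.castSucc) le_rfl)

lemma cantorStage_zero : cantorStage α 0 = Set.Icc (0:ℝ) 1 := by
  simp [cantorStage, stageLen, leftPt]
  rw [Set.iUnion_const]

lemma cantorStage_antitone (hα : ∀ n, α n ∈ Set.Ioo (0:ℝ) 1) : Antitone (cantorStage α) :=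
  antitone_nat_of_succ_le (cantorStage_succ_subset hα)

noncomputable def gap (α : ℕ → ℝ) (n : ℕ) (b : Fin n → Bool) : Set ℝ :=
  Set.Ioo (leftPt α n b + stageLen α (n+1)) (leftPt α n b + stageLen α n - stageLen α (n+1))

lemma diff_eq_gaps (hα : ∀ n, α n ∈ Set.Ioo (0:ℝ) 1) (n : ℕ) :
    cantorStage α n \ cantorStage α (n+1) = ⋃ b : Fin n → Bool, gap α n b := by
  have hL := two_stageLen_succ_lt hα n
  have hL' := stageLen_pos hα (n+1)
  ext x
  constructor
  · rintro ⟨hx1, hx2⟩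
    obtain ⟨s, ⟨b, rfl⟩, hxb⟩ := hx1
    refine Set.mem_iUnion.2 ⟨b, ?_⟩
    have h1 : x ∉ Set.Icc (leftPt α (n+1) (Fin.snoc b false))
        (leftPt α (n+1) (Fin.snoc b false) + stageLen α (n+1)) := by
      intro hmem
      exact hx2 (Set.mem_iUnion.2 ⟨Fin.snoc b false, hmem⟩)
    have h2 : x ∉ Set.Icc (leftPt α (n+1) (Fin.snoc b true))
        (leftPt α (n+1) (Fin.snoc b true) + stageLen α (n+1)) := by
      intro hmem
      exact hx2 (Set.mem_iUnion.2 ⟨Fin.snoc b true, hmem⟩)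
    have e1 : leftPt α (n+1) (Fin.snoc b false) = leftPt α n b := by
      rw [leftPt_false (by simp)]
      congr 1
      funext i; simp
    have e2 : leftPt α (n+1) (Fin.snoc b true) =
        leftPt α n b + (stageLen α n - stageLen α (n+1)) := by
      rw [leftPt_true (by simp)]
      congr 2
      funext i; simp
    rw [e1, Set.mem_Icc, not_and_or] at h1
    rw [e2, Set.mem_Icc, not_and_or] at h2
    obtain ⟨hxl, hxr⟩ := hxb
    constructor
    · rcases h1 with h | h
      · exact absurd hxl h
      · push_neg at h; exact h
    · rcases h2 with h | h
      · push_neg at h; linarith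
      · exact absurd (by linarith : x ≤ leftPt α n b + (stageLen α n - stageLen α (n+1)) +
          stageLen α (n+1)) h
  · intro hx
    obtain ⟨s, ⟨b, rfl⟩, hxb⟩ := hx
    obtain ⟨hxl, hxr⟩ := hxb
    have hxIcc : x ∈ Set.Icc (leftPt α n b) (leftPt α n b + stageLen α n) :=
      ⟨by linarith, by linarith⟩
    refine ⟨Set.mem_iUnion.2 ⟨b, hxIcc⟩, ?_⟩
    intro hmem
    obtain ⟨s, ⟨b₁, rfl⟩, hxb₁⟩ := hmem
    simp only [Set.mem_Icc] at hxb₁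
    by_cases hr : (fun i : Fin n => b₁ i.castSucc) = b
    · cases hb₁ : b₁ (Fin.last n) with
      | false =>
        rw [leftPt_false hb₁, hr] at hxb₁
        obtain ⟨_, h⟩ := hxb₁
        linarith
      | true =>
        rw [leftPt_true hb₁, hr] at hxb₁
        obtain ⟨h, _⟩ := hxb₁
        linarith
    · have := pairwise_disjoint_intervals hα n (fun i : Fin n => b₁ i.castSucc) b hr
      exact Set.disjoint_left.1 this (child_subset hα b₁ hxb₁) hxIcc

lemma volume_gap (hα : ∀ n, α n ∈ Set.Ioo (0:ℝ) 1) (n : ℕ) (b : Fin n → Bool) :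
    volume (gap α n b) = ENNReal.ofReal (removedLen α n) := by
  rw [gap, Real.volume_Ioo]
  congr 1
  simp only [removedLen, stageLen]
  ring

lemma measurable_cantorStage (n : ℕ) : MeasurableSet (cantorStage α n) :=
  MeasurableSet.iUnion fun _ => measurableSet_Icc

lemma measurable_gCantorSet : MeasurableSet (gCantorSet α) :=
  MeasurableSet.iInter fun _ => measurable_cantorStage _

lemma volume_diff_le (hα : ∀ n, α n ∈ Set.Ioo (0:ℝ) 1) (n : ℕ) :
    volume (cantorStage α n \ cantorStage α (n+1)) ≤
      ENNReal.ofReal (2^n * removedLen α n) := by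
  rw [diff_eq_gaps hα n]
  refine (measure_iUnion_fintype_le _ _).trans ?_
  simp only [volume_gap hα n, Finset.sum_const, Finset.card_univ, Fintype.card_fun,
    Fintype.card_bool, Fintype.card_fin, nsmul_eq_mul]
  rw [ENNReal.ofReal_mul (by positivity : (0:ℝ) ≤ (2:ℝ)^n)]
  apply le_of_eq
  congr 1
  rw [ENNReal.ofReal_pow zero_le_two]
  push_cast
  norm_num

open Real in
lemma fourier_indicator {A : Set ℝ} (hA : MeasurableSet A) (ξ : ℝ) :
    FourierTransform.fourier (A.indicator fun _ => (1:ℂ)) ξ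
      = ∫ x in A, Complex.exp (↑(-2 * π * x * ξ) * Complex.I) := by
  rw [Real.fourier_real_eq_integral_exp_smul, ← integral_indicator hA]
  congr 1
  funext x
  by_cases hx : x ∈ A <;> simp [hx]

open Real in
lemma cexp_cont (ξ : ℝ) : Continuous fun x : ℝ => Complex.exp (↑(-2 * π * x * ξ) * Complex.I) := by
  fun_prop

lemma integrable_indicator_one {A : Set ℝ} (hA : MeasurableSet A) (hfin : volume A ≠ ⊤) :
    Integrable (A.indicator fun _ => (1:ℂ)) := by
  rw [integrable_indicator_iff hA]
  exact integrableOn_const hfin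

lemma fourier_norm_le_volume {A : Set ℝ} (hA : MeasurableSet A) (ξ : ℝ) :
    ‖FourierTransform.fourier (A.indicator fun _ => (1:ℂ)) ξ‖ ≤ (volume A).toReal := by
  refine (VectorFourier.norm_fourierIntegral_le_integral_norm _ _ _ _ _).trans ?_
  have : (fun x : ℝ => ‖A.indicator (fun _ => (1:ℂ)) x‖) = A.indicator (fun _ => (1:ℝ)) := by
    funext x
    by_cases hx : x ∈ A <;> simp [hx]
  rw [this, ← Pi.one_def, integral_indicator_one hA]
  exact le_rfl

open Real in
lemma norm_setInt_exp_le {u v : ℝ} (huv : u ≤ v) {ξ : ℝ} (hξ : ξ ≠ 0) :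
    ‖∫ x in Set.Ioo u v, Complex.exp (↑(-2 * π * x * ξ) * Complex.I)‖ ≤ 1 / (π * |ξ|) := by
  have hπ := Real.pi_pos
  set c : ℂ := ↑(-2 * π * ξ) * Complex.I with hc
  have hcnorm : ‖c‖ = 2 * π * |ξ| := by
    rw [hc, norm_mul, Complex.norm_I, mul_one, Complex.norm_real, Real.norm_eq_abs,
      abs_mul, abs_mul, abs_of_pos hπ]
    norm_num
  have hc0 : c ≠ 0 := by
    intro h
    rw [h, norm_zero] at hcnorm
    have : |ξ| > 0 := abs_pos.2 hξ
    nlinarith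
  have key : ∀ x : ℝ, Complex.exp (↑(-2 * π * x * ξ) * Complex.I) = Complex.exp (c * x) := by
    intro x
    congr 1
    rw [hc]
    push_cast
    ring
  simp only [key]
  rw [← MeasureTheory.integral_Ioc_eq_integral_Ioo, ← intervalIntegral.integral_of_le huv,
    integral_exp_mul_complex hc0]
  rw [norm_div, hcnorm]
  have h1 : ∀ x : ℝ, ‖Complex.exp (c * x)‖ = 1 := by
    intro x
    have : c * x = ↑(-2 * π * ξ * x) * Complex.I := by rw [hc]; push_cast; ring
    rw [this, Complex.norm_exp_ofReal_mul_I]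
  have h2 : ‖Complex.exp (c * v) - Complex.exp (c * u)‖ ≤ 2 := by
    refine (norm_sub_le _ _).trans ?_
    rw [h1, h1]; norm_num
  have habs : 0 < |ξ| := abs_pos.2 hξ
  rw [div_le_div_iff₀ (by positivity) (by positivity)]
  have := mul_le_mul_of_nonneg_right h2 (by positivity : (0:ℝ) ≤ π * |ξ|)
  nlinarith

lemma gap_subset_Icc (hα : ∀ n, α n ∈ Set.Ioo (0:ℝ) 1) (n : ℕ) (b : Fin n → Bool) :
    gap α n b ⊆ Set.Icc (leftPt α n b) (leftPt α n b + stageLen α n) := by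
  have h2 := stageLen_pos hα (n+1)
  rintro x ⟨h3, h4⟩
  exact ⟨by linarith, by linarith⟩

open Real in
lemma fourier_diff_le (hα : ∀ n, α n ∈ Set.Ioo (0:ℝ) 1) (n : ℕ) {ξ : ℝ} (hξ : ξ ≠ 0) :
    ‖FourierTransform.fourier ((cantorStage α n \ cantorStage α (n+1)).indicator
      fun _ => (1:ℂ)) ξ‖ ≤ 2^n / (π * |ξ|) := by
  have hmeas : MeasurableSet (cantorStage α n \ cantorStage α (n+1)) :=
    (measurable_cantorStage n).diff (measurable_cantorStage (n+1))
  rw [fourier_indicator hmeas ξ, diff_eq_gaps hα n]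
  have hgm : ∀ b : Fin n → Bool, MeasurableSet (gap α n b) := fun _ => measurableSet_Ioo
  have hgd : Pairwise (Function.onFun Disjoint (gap α n ·)) := by
    intro b b' hbb
    exact Set.disjoint_of_subset (gap_subset_Icc hα n b) (gap_subset_Icc hα n b')
      (pairwise_disjoint_intervals hα n b b' hbb)
  have hint : IntegrableOn (fun x : ℝ => Complex.exp (↑(-2 * π * x * ξ) * Complex.I))
      (⋃ b : Fin n → Bool, gap α n b) := by
    apply IntegrableOn.mono_set ((cexp_cont ξ).integrableOn_Icc (a := 0) (b := 1))
    refine Set.iUnion_subset fun b => (gap_subset_Icc hα n b).trans ?_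
    have : Set.Icc (leftPt α n b) (leftPt α n b + stageLen α n) ⊆ cantorStage α n :=
      Set.subset_iUnion_of_subset b le_rfl
    refine this.trans ?_
    rw [← cantorStage_zero (α := α)]
    exact cantorStage_antitone hα (Nat.zero_le n)
  rw [MeasureTheory.integral_iUnion hgm hgd hint, tsum_fintype]
  refine (norm_sum_le _ _).trans ?_
  have hb : ∀ b : Fin n → Bool,
      ‖∫ x in gap α n b, Complex.exp (↑(-2 * π * x * ξ) * Complex.I)‖ ≤ 1 / (π * |ξ|) := by
    intro b
    apply norm_setInt_exp_le _ hξ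
    have := two_stageLen_succ_lt hα n
    have := stageLen_pos hα (n+1)
    linarith
  refine (Finset.sum_le_sum fun b _ => hb b).trans ?_
  rw [Finset.sum_const, Finset.card_univ, Fintype.card_fun, Fintype.card_bool, Fintype.card_fin,
    nsmul_eq_mul]
  apply le_of_eq
  push_cast
  ring

lemma subset_unit (hα : ∀ n, α n ∈ Set.Ioo (0:ℝ) 1) {n : ℕ} :
    cantorStage α n ⊆ Set.Icc (0:ℝ) 1 := by
  rw [← cantorStage_zero (α := α)]
  exact cantorStage_antitone hα (Nat.zero_le n)

lemma fin_vol {A : Set ℝ} (h : A ⊆ Set.Icc (0:ℝ) 1) : volume A ≠ ⊤ :=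
  ((measure_mono h).trans_lt measure_Icc_lt_top).ne

lemma fourierIntegral_add' {f g : ℝ → ℂ} (hf : Integrable f) (hg : Integrable g) (ξ : ℝ) :
    FourierTransform.fourier (fun x => f x + g x) ξ
      = FourierTransform.fourier f ξ + FourierTransform.fourier g ξ := by
  have hL : Continuous fun p : ℝ × ℝ => @inner ℝ ℝ _ p.1 p.2 := continuous_inner
  have h := congrFun (VectorFourier.fourierIntegral_add (L := innerₗ ℝ)
    Real.continuous_fourierChar hL hf hg) ξ
  exact h

open Real in
lemma fourier_head_le (hα : ∀ n, α n ∈ Set.Ioo (0:ℝ) 1) {ξ : ℝ} (hξ : ξ ≠ 0) (N : ℕ) :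
    ‖FourierTransform.fourier ((cantorStage α 0 \ cantorStage α N).indicator fun _ => (1:ℂ)) ξ‖
      ≤ 2^N / (π * |ξ|) := by
  have hπ := Real.pi_pos
  have habs : (0:ℝ) < |ξ| := abs_pos.2 hξ
  induction N with
  | zero =>
    rw [Set.diff_self, Set.indicator_empty]
    have : FourierTransform.fourier (fun _ : ℝ => (0:ℂ)) ξ = 0 := by
      rw [Real.fourier_real_eq]
      simp
    rw [this, norm_zero]
    positivity
  | succ N ih =>
    have hsplit : cantorStage α 0 \ cantorStage α (N+1) =
        (cantorStage α 0 \ cantorStage α N) ∪ (cantorStage α N \ cantorStage α (N+1)) :=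
      (Set.diff_union_diff_cancel (cantorStage_antitone hα (Nat.zero_le N))
        (cantorStage_succ_subset hα N)).symm
    have hdisj : Disjoint (cantorStage α 0 \ cantorStage α N)
        (cantorStage α N \ cantorStage α (N+1)) :=
      Set.disjoint_left.2 fun x hx hx' => hx.2 hx'.1
    have i1 : Integrable ((cantorStage α 0 \ cantorStage α N).indicator fun _ => (1:ℂ)) :=
      integrable_indicator_one ((measurable_cantorStage 0).diff (measurable_cantorStage N))
        (fin_vol (Set.diff_subset.trans (subset_unit hα)))
    have i2 : Integrable ((cantorStage α N \ cantorStage α (N+1)).indicator fun _ => (1:ℂ)) :=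
      integrable_indicator_one ((measurable_cantorStage N).diff (measurable_cantorStage (N+1)))
        (fin_vol (Set.diff_subset.trans (subset_unit hα)))
    rw [hsplit, Set.indicator_union_of_disjoint hdisj, fourierIntegral_add' i1 i2 ξ]
    refine (norm_add_le _ _).trans ?_
    have h1 := fourier_diff_le hα N hξ
    have h2 : (2:ℝ)^N/(π*|ξ|) + 2^N/(π*|ξ|) = 2^(N+1)/(π*|ξ|) := by ring
    linarith

lemma tail_subset (hα : ∀ n, α n ∈ Set.Ioo (0:ℝ) 1) (N : ℕ) :
    cantorStage α N \ gCantorSet α ⊆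
      ⋃ k : ℕ, (cantorStage α (N+k) \ cantorStage α (N+k+1)) := by
  classical
  rintro x ⟨hxN, hxC⟩
  have hex : ∃ m, x ∉ cantorStage α m := by
    by_contra h
    push_neg at h
    exact hxC (Set.mem_iInter.2 h)
  have hm : x ∉ cantorStage α (Nat.find hex) := Nat.find_spec hex
  have hNm : N < Nat.find hex := by
    rcases lt_or_ge N (Nat.find hex) with h | h
    · exact h
    · exact absurd (cantorStage_antitone hα h hxN) hm
  refine Set.mem_iUnion.2 ⟨Nat.find hex - N - 1, ?_⟩
  have hm1 : N + (Nat.find hex - N - 1) + 1 = Nat.find hex := by omega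
  refine ⟨?_, by rw [hm1]; exact hm⟩
  have hlt : N + (Nat.find hex - N - 1) < Nat.find hex := by omega
  have := Nat.find_min hex hlt
  simpa using this

lemma removedLen_pos (hα : ∀ n, α n ∈ Set.Ioo (0:ℝ) 1) (n : ℕ) : 0 < removedLen α n :=
  mul_pos (stageLen_pos hα n) (hα n).1

lemma rpow_add_le {x y p : ℝ} (hx : 0 ≤ x) (hy : 0 ≤ y) (hp : 0 ≤ p) (hp1 : p ≤ 1) :
    (x + y) ^ p ≤ x ^ p + y ^ p := by
  lift x to NNReal using hx
  lift y to NNReal using hy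
  have h := NNReal.rpow_add_le_add_rpow x y hp hp1
  exact_mod_cast h

lemma exists_M (hα : ∀ n, α n ∈ Set.Ioo (0:ℝ) 1) {δ : ℝ} (hδ : 0 < δ)
    (hsum : Summable fun n : ℕ => removedLen α n ^ ((4 : ℝ) ^ (-((n : ℝ) + 1) / δ))) :
    ∃ M : ℕ, ∀ n, M ≤ n →
      removedLen α n ≤ (1/2:ℝ) ^ ((4:ℝ) ^ (((n:ℝ)+1)/δ)) := by
  have h0 := hsum.tendsto_atTop_zero
  have hev : ∀ᶠ n : ℕ in Filter.atTop,
      removedLen α n ^ ((4 : ℝ) ^ (-((n : ℝ) + 1) / δ)) < 1/2 :=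
    h0.eventually_lt_const (by norm_num)
  obtain ⟨M, hM⟩ := Filter.eventually_atTop.1 hev
  refine ⟨M, fun n hn => ?_⟩
  have ht := removedLen_pos hα n
  set E : ℝ := (4:ℝ) ^ (((n:ℝ)+1)/δ) with hE
  have hEpos : 0 < E := Real.rpow_pos_of_pos (by norm_num) _
  have hεE : (4:ℝ) ^ (-((n:ℝ)+1)/δ) = E⁻¹ := by
    rw [hE, ← Real.rpow_neg (by norm_num : (0:ℝ) ≤ 4), neg_div]
  have h1 : removedLen α n ^ E⁻¹ ≤ 1/2 := by
    rw [← hεE]; exact (hM n hn).le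
  calc removedLen α n = (removedLen α n ^ E⁻¹) ^ E := by
        rw [← Real.rpow_mul ht.le, inv_mul_cancel₀ hEpos.ne', Real.rpow_one]
    _ ≤ (1/2:ℝ) ^ E := Real.rpow_le_rpow (Real.rpow_nonneg ht.le _) h1 hEpos.le

lemma E_lower {δ : ℝ} (hδ : 0 < δ) (hδ1 : δ < 1) (n : ℕ) :
    (4:ℝ) ≤ (4:ℝ) ^ (((n:ℝ)+1)/δ) := by
  have h1 : (1:ℝ) ≤ ((n:ℝ)+1)/δ := by
    rw [le_div_iff₀ hδ]
    have : (0:ℝ) ≤ (n:ℝ) := Nat.cast_nonneg n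
    linarith
  calc (4:ℝ) = (4:ℝ) ^ (1:ℝ) := (Real.rpow_one 4).symm
    _ ≤ _ := Real.rpow_le_rpow_of_exponent_le (by norm_num) h1

lemma E_gap {δ : ℝ} (hδ : 0 < δ) (hδ1 : δ < 1) (N k : ℕ) :
    (4:ℝ) ^ (((N:ℝ)+1)/δ) + 4 * k ≤ (4:ℝ) ^ ((((N+k:ℕ):ℝ)+1)/δ) := by
  have hEN := E_lower hδ hδ1 N
  have key : (4:ℝ) ^ ((((N+k:ℕ):ℝ)+1)/δ) = (4:ℝ) ^ (((N:ℝ)+1)/δ) * (4:ℝ) ^ ((k:ℝ)/δ) := by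
    rw [← Real.rpow_add (by norm_num : (0:ℝ) < 4)]
    congr 1
    push_cast
    ring
  have h4k : (1:ℝ) + k ≤ (4:ℝ) ^ ((k:ℝ)/δ) := by
    have h1 : (1:ℝ) + 3 * k ≤ (4:ℝ) ^ (k:ℕ) := by
      have := one_add_mul_le_pow (by norm_num : (-2:ℝ) ≤ 3) k
      norm_num at this ⊢
      linarith
    have h2 : ((4:ℝ) ^ (k:ℕ) : ℝ) = (4:ℝ) ^ ((k:ℝ)) := (Real.rpow_natCast 4 k).symm
    have h3 : (4:ℝ) ^ ((k:ℝ)) ≤ (4:ℝ) ^ ((k:ℝ)/δ) := by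
      apply Real.rpow_le_rpow_of_exponent_le (by norm_num)
      rw [le_div_iff₀ hδ]
      nlinarith [Nat.cast_nonneg (α := ℝ) k]
    have : (0:ℝ) ≤ k := Nat.cast_nonneg k
    linarith [h1, h2 ▸ h3]
  have hk0 : (0:ℝ) ≤ k := Nat.cast_nonneg k
  rw [key]
  nlinarith

lemma tail_term_bound {δ : ℝ} (hδ : 0 < δ) (hδ1 : δ < 1) {ξ : ℝ}
    (N k : ℕ) (hξE : |ξ| ≤ (2:ℝ) ^ ((4:ℝ) ^ (((N:ℝ)+1)/δ)))
    {r : ℝ} (hr : 0 ≤ r) (hrb : r ≤ (1/2:ℝ) ^ ((4:ℝ) ^ ((((N+k:ℕ):ℝ)+1)/δ))) :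
    |ξ| * ((2:ℝ)^(N+k) * r) ≤ 2^N * (1/8:ℝ)^k := by
  have h2 : (0:ℝ) < 2 := two_pos
  set a := (4:ℝ) ^ (((N:ℝ)+1)/δ) with ha
  set b := (4:ℝ) ^ ((((N+k:ℕ):ℝ)+1)/δ) with hb
  have hgap : a + 4*k ≤ b := E_gap hδ hδ1 N k
  have e1 : ((2:ℝ)^(N+k) : ℝ) = (2:ℝ) ^ (((N:ℝ)+(k:ℝ))) := by
    rw [← Real.rpow_natCast 2 (N+k)]
    push_cast
    ring_nf
  have e2 : (1/2:ℝ) ^ b = (2:ℝ) ^ (-b) := by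
    rw [one_div, Real.rpow_neg h2.le, ← Real.inv_rpow h2.le]
  have step : |ξ| * ((2:ℝ)^(N+k) * r) ≤ (2:ℝ)^a * ((2:ℝ)^((N:ℝ)+(k:ℝ)) * (2:ℝ)^(-b)) := by
    have hx0 : (0:ℝ) ≤ |ξ| := abs_nonneg _
    have hr2 : (2:ℝ)^(N+k) * r ≤ (2:ℝ)^((N:ℝ)+(k:ℝ)) * (2:ℝ)^(-b) := by
      rw [e1]
      exact mul_le_mul_of_nonneg_left (hrb.trans_eq e2) (Real.rpow_nonneg h2.le _)
    apply mul_le_mul hξE hr2 (by positivity) (Real.rpow_nonneg h2.le _)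
  have comb : (2:ℝ)^a * ((2:ℝ)^((N:ℝ)+(k:ℝ)) * (2:ℝ)^(-b)) = (2:ℝ)^(a + ((N:ℝ)+(k:ℝ)) + -b) := by
    rw [← Real.rpow_add h2, ← Real.rpow_add h2]
    ring_nf
  have mono : (2:ℝ)^(a + ((N:ℝ)+(k:ℝ)) + -b) ≤ (2:ℝ)^((N:ℝ) - 3*(k:ℝ)) :=
    Real.rpow_le_rpow_of_exponent_le one_le_two (by linarith)
  have h8 : (2:ℝ) ^ ((3:ℝ)*(k:ℝ)) = 8^k := by
    rw [show (3:ℝ)*(k:ℝ) = ((3*k : ℕ):ℝ) by push_cast; ring, Real.rpow_natCast, pow_mul]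
    norm_num
  have final : (2:ℝ)^((N:ℝ) - 3*(k:ℝ)) = 2^N * (1/8:ℝ)^k := by
    rw [show (N:ℝ) - 3*(k:ℝ) = (N:ℝ) + -((3:ℝ)*(k:ℝ)) by ring, Real.rpow_add h2,
      Real.rpow_neg h2.le, h8, Real.rpow_natCast, one_div, inv_pow]
  calc |ξ| * ((2:ℝ)^(N+k) * r) ≤ (2:ℝ)^a * ((2:ℝ)^((N:ℝ)+(k:ℝ)) * (2:ℝ)^(-b)) := step
    _ = (2:ℝ)^(a + ((N:ℝ)+(k:ℝ)) + -b) := comb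
    _ ≤ (2:ℝ)^((N:ℝ) - 3*(k:ℝ)) := mono
    _ = 2^N * (1/8:ℝ)^k := final

lemma volume_tail_le' (hα : ∀ n, α n ∈ Set.Ioo (0:ℝ) 1) {δ : ℝ} (hδ : 0 < δ) (hδ1 : δ < 1)
    {M : ℕ} (hMp : ∀ n, M ≤ n → removedLen α n ≤ (1/2:ℝ) ^ ((4:ℝ) ^ (((n:ℝ)+1)/δ)))
    {ξ : ℝ} (habs : 0 < |ξ|) {N : ℕ} (hMN : M ≤ N)
    (hξE : |ξ| ≤ (2:ℝ) ^ ((4:ℝ) ^ (((N:ℝ)+1)/δ))) :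
    volume (cantorStage α N \ gCantorSet α) ≤ ENNReal.ofReal ((2:ℝ)^(N+1) / |ξ|) := by
  refine (measure_mono (tail_subset hα N)).trans ?_
  refine (measure_iUnion_le _).trans ?_
  have hterm : ∀ k : ℕ, volume (cantorStage α (N+k) \ cantorStage α (N+k+1)) ≤
      ENNReal.ofReal ((2:ℝ)^N * (1/8:ℝ)^k / |ξ|) := by
    intro k
    refine (volume_diff_le hα (N+k)).trans ?_
    apply ENNReal.ofReal_le_ofReal
    rw [le_div_iff₀ habs, mul_comm _ |ξ|]
    exact tail_term_bound hδ hδ1 N k hξE (removedLen_pos hα (N+k)).le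
      (hMp (N+k) (le_trans hMN (Nat.le_add_right N k)))
  refine (ENNReal.tsum_le_tsum hterm).trans ?_
  have hsummable : Summable (fun k : ℕ => (2:ℝ)^N * (1/8:ℝ)^k / |ξ|) := by
    have : Summable (fun k : ℕ => (1/8:ℝ)^k) :=
      summable_geometric_of_lt_one (by norm_num) (by norm_num)
    simpa [mul_div_assoc, mul_comm, div_eq_mul_inv, mul_assoc] using
      (this.mul_left ((2:ℝ)^N * |ξ|⁻¹)).congr (fun k => by ring_nf; simp only [one_div])
  rw [← ENNReal.ofReal_tsum_of_nonneg (fun k => by positivity) hsummable]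
  apply ENNReal.ofReal_le_ofReal
  have : (fun k : ℕ => (2:ℝ)^N * (1/8:ℝ)^k / |ξ|) = fun k => ((2:ℝ)^N / |ξ|) * (1/8:ℝ)^k := by
    funext k; ring
  rw [this, tsum_mul_left, tsum_geometric_of_lt_one (by norm_num) (by norm_num)]
  have h78 : ((1:ℝ) - 1/8)⁻¹ ≤ 2 := by norm_num
  have hpos : (0:ℝ) ≤ (2:ℝ)^N / |ξ| := by positivity
  calc (2:ℝ)^N / |ξ| * ((1:ℝ)-1/8)⁻¹ ≤ (2:ℝ)^N / |ξ| * 2 := by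
        exact mul_le_mul_of_nonneg_left h78 hpos
    _ = (2:ℝ)^(N+1) / |ξ| := by ring


set_option maxHeartbeats 1000000 in
open Real in
/-- If the removed lengths `l_n` of a generalized Cantor set `C`
satisfy `∑ₙ l_n^(1/4^(n/δ)) < ∞` for some `δ ∈ (0,1)`, then for `I = [0,1] \ C`
there is `λ > 0` with `|𝓕(χ_I)(ξ)|² ≤ λ (1 + log^δ(1+|ξ|)) / |ξ|²` for all `ξ ≠ 0`.
(Here `removedLen α n` is the paper's `l_{n+1}`.) -/
theorem stmt1 (α : ℕ → ℝ) (hα : ∀ n, α n ∈ Set.Ioo (0 : ℝ) 1) (δ : ℝ)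
    (hδ : δ ∈ Set.Ioo (0 : ℝ) 1)
    (hsum : Summable fun n : ℕ => removedLen α n ^ ((4 : ℝ) ^ (-((n : ℝ) + 1) / δ))) :
    ∃ lam > (0 : ℝ), ∀ ξ : ℝ, ξ ≠ 0 →
      ‖FourierTransform.fourier ((Set.Icc (0 : ℝ) 1 \ gCantorSet α).indicator
          fun _ => (1 : ℂ)) ξ‖ ^ 2 ≤
        lam * (1 + Real.log (1 + |ξ|) ^ δ) / |ξ| ^ 2 := by
  obtain ⟨hδpos, hδ1⟩ := hδ
  obtain ⟨M, hM⟩ := exists_M hα hδpos hsum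
  have h4M : (1:ℝ) ≤ 4^(M+2) := one_le_pow₀ (by norm_num)
  refine ⟨18 * 4^(M+2), by linarith, ?_⟩
  intro ξ hξ
  have habs : 0 < |ξ| := abs_pos.2 hξ
  set L := Real.log (1 + |ξ|) with hLdef
  have hL0 : 0 ≤ L := Real.log_nonneg (by linarith)
  have hLδ0 : 0 ≤ L ^ δ := Real.rpow_nonneg hL0 δ
  have hIdef : Set.Icc (0:ℝ) 1 \ gCantorSet α = cantorStage α 0 \ gCantorSet α := by
    rw [cantorStage_zero]
  rw [hIdef]
  have hmeasI : MeasurableSet (cantorStage α 0 \ gCantorSet α) :=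
    (measurable_cantorStage 0).diff measurable_gCantorSet
  rcases le_or_gt |ξ| 1 with hsmall | hbig
  · -- small frequencies
    have hb := fourier_norm_le_volume (A := cantorStage α 0 \ gCantorSet α) hmeasI ξ
    have hv : (volume (cantorStage α 0 \ gCantorSet α)).toReal ≤ 1 := by
      apply ENNReal.toReal_le_of_le_ofReal zero_le_one
      have h1 : volume (cantorStage α 0 \ gCantorSet α) ≤ volume (Set.Icc (0:ℝ) 1) :=
        measure_mono (Set.diff_subset.trans (subset_unit hα))
      rw [Real.volume_Icc] at h1
      simpa using h1
    have hF2 : ‖FourierTransform.fourier ((cantorStage α 0 \ gCantorSet α).indicator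
        fun _ => (1:ℂ)) ξ‖ ^ 2 ≤ 1 := by
      nlinarith [norm_nonneg (FourierTransform.fourier ((cantorStage α 0 \ gCantorSet α).indicator
        fun _ => (1:ℂ)) ξ)]
    have hRHS : (1:ℝ) ≤ 18 * 4^(M+2) * (1 + L ^ δ) / |ξ|^2 := by
      rw [le_div_iff₀ (by positivity)]
      nlinarith
    linarith
  · -- large frequencies
    have hLpos : 0 < L := Real.log_pos (by linarith)
    set t := max 1 (Real.logb 2 |ξ|) with ht
    have ht1 : 1 ≤ t := le_max_left _ _
    have ht0 : (0:ℝ) < t := lt_of_lt_of_le one_pos ht1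
    set N₀ := ⌈δ * Real.logb 4 t⌉₊ with hN0
    set N := max M N₀ with hN
    have hMN : M ≤ N := le_max_left _ _
    have hlogb40 : 0 ≤ Real.logb 4 t := Real.logb_nonneg (by norm_num) ht1
    -- (i) |ξ| ≤ 2 ^ (4 ^ ((N+1)/δ))
    have hξE : |ξ| ≤ (2:ℝ) ^ ((4:ℝ) ^ (((N:ℝ)+1)/δ)) := by
      have h1 : Real.logb 2 |ξ| ≤ t := le_max_right _ _
      have h2 : t ≤ (4:ℝ) ^ (((N:ℝ)+1)/δ) := by
        conv_lhs => rw [← Real.rpow_logb (by norm_num : (0:ℝ) < 4) (by norm_num) ht0]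
        apply Real.rpow_le_rpow_of_exponent_le (by norm_num)
        rw [le_div_iff₀ hδpos]
        have hc := Nat.le_ceil (δ * Real.logb 4 t)
        have hN0N : (N₀:ℝ) ≤ (N:ℝ) := Nat.cast_le.2 (le_max_right _ _)
        rw [← hN0] at hc
        nlinarith
      calc |ξ| = (2:ℝ) ^ (Real.logb 2 |ξ|) :=
            (Real.rpow_logb two_pos (by norm_num) habs).symm
        _ ≤ (2:ℝ) ^ ((4:ℝ)^(((N:ℝ)+1)/δ)) :=
            Real.rpow_le_rpow_of_exponent_le one_le_two (h1.trans h2)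
    -- (ii) 2^N bound
    have h2N : (2:ℝ)^N ≤ 2^(M+2) * (1 + L ^ (δ/2)) := by
      have hNle : N ≤ M + N₀ := max_le (Nat.le_add_right M N₀) (Nat.le_add_left N₀ M)
      have step1 : (2:ℝ)^N ≤ 2^M * 2^N₀ := by
        rw [← pow_add]
        exact pow_le_pow_right₀ one_le_two hNle
      have hceil : (N₀:ℝ) ≤ δ * Real.logb 4 t + 1 :=
        (Nat.ceil_lt_add_one (by positivity)).le
      have e3 : (2:ℝ) ^ (δ * Real.logb 4 t) = t ^ (δ/2) := by
        rw [Real.rpow_def_of_pos two_pos, Real.rpow_def_of_pos ht0, Real.logb]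
        congr 1
        have hlog4 : Real.log 4 = 2 * Real.log 2 := by
          rw [show (4:ℝ) = 2^2 by norm_num, Real.log_pow]
          push_cast
          ring
        have hlog2 : Real.log 2 ≠ 0 := by
          have := Real.log_two_gt_d9
          intro h
          rw [h] at this
          norm_num at this
        rw [hlog4]
        field_simp
      have step2 : (2:ℝ)^N₀ ≤ 2 * t^(δ/2) := by
        calc (2:ℝ)^N₀ = (2:ℝ)^((N₀:ℝ)) := (Real.rpow_natCast 2 N₀).symm
          _ ≤ (2:ℝ)^(δ * Real.logb 4 t + 1) :=
              Real.rpow_le_rpow_of_exponent_le one_le_two hceil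
          _ = (2:ℝ)^(δ * Real.logb 4 t) * 2 := by rw [Real.rpow_add two_pos, Real.rpow_one]
          _ = 2 * t^(δ/2) := by rw [e3]; ring
      have htL : t ≤ 1 + 2*L := by
        apply max_le
        · linarith
        · rw [Real.logb]
          have hlog2 : (1/2:ℝ) < Real.log 2 := by
            have := Real.log_two_gt_d9
            linarith
          have hlogξ : Real.log |ξ| ≤ L := Real.log_le_log habs (by linarith)
          have hlogξ0 : 0 ≤ Real.log |ξ| := Real.log_nonneg hbig.le
          rw [div_le_iff₀ (by linarith : (0:ℝ) < Real.log 2)]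
          nlinarith
      have hsub : t^(δ/2) ≤ 1 + 2 * L^(δ/2) := by
        have h1 : t^(δ/2) ≤ (1 + 2*L)^(δ/2) :=
          Real.rpow_le_rpow ht0.le htL (by linarith)
        have h2 : ((1:ℝ) + 2*L)^(δ/2) ≤ (1:ℝ)^(δ/2) + (2*L)^(δ/2) :=
          rpow_add_le zero_le_one (by linarith) (by linarith) (by linarith)
        have h3 : ((1:ℝ))^(δ/2) = 1 := Real.one_rpow _
        have h4 : ((2:ℝ)*L)^(δ/2) = 2^(δ/2) * L^(δ/2) := Real.mul_rpow (by norm_num) hL0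
        have h5 : (2:ℝ)^(δ/2) ≤ 2 := by
          calc (2:ℝ)^(δ/2) ≤ 2^(1:ℝ) :=
              Real.rpow_le_rpow_of_exponent_le one_le_two (by linarith)
            _ = 2 := Real.rpow_one 2
        have hLp : 0 ≤ L^(δ/2) := Real.rpow_nonneg hL0 _
        nlinarith
      have h2M : (0:ℝ) ≤ 2^M := by positivity
      have hLp' : 0 ≤ L^(δ/2) := Real.rpow_nonneg hL0 _
      have q1 : 2 * t^(δ/2) ≤ 4*(1 + L^(δ/2)) := by linarith
      have q2 : (2:ℝ)^M * (4*(1 + L^(δ/2))) = 2^(M+2) * (1 + L^(δ/2)) := by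
        rw [pow_add]; ring
      calc (2:ℝ)^N ≤ 2^M * 2^N₀ := step1
        _ ≤ 2^M * (2 * t^(δ/2)) := mul_le_mul_of_nonneg_left step2 h2M
        _ ≤ 2^M * (4*(1 + L^(δ/2))) := mul_le_mul_of_nonneg_left q1 h2M
        _ = 2^(M+2) * (1 + L^(δ/2)) := q2
    -- decomposition
    have hCsub : gCantorSet α ⊆ cantorStage α N := Set.iInter_subset _ N
    have hsplit : cantorStage α 0 \ gCantorSet α =
        (cantorStage α 0 \ cantorStage α N) ∪ (cantorStage α N \ gCantorSet α) :=
      (Set.diff_union_diff_cancel (cantorStage_antitone hα (Nat.zero_le N)) hCsub).symm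
    have hdisj : Disjoint (cantorStage α 0 \ cantorStage α N)
        (cantorStage α N \ gCantorSet α) :=
      Set.disjoint_left.2 fun x hx hx' => hx.2 hx'.1
    have i1 : Integrable ((cantorStage α 0 \ cantorStage α N).indicator fun _ => (1:ℂ)) :=
      integrable_indicator_one ((measurable_cantorStage 0).diff (measurable_cantorStage N))
        (fin_vol (Set.diff_subset.trans (subset_unit hα)))
    have i2 : Integrable ((cantorStage α N \ gCantorSet α).indicator fun _ => (1:ℂ)) :=
      integrable_indicator_one ((measurable_cantorStage N).diff measurable_gCantorSet)
        (fin_vol (Set.diff_subset.trans (subset_unit hα)))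
    have hFeq : FourierTransform.fourier ((cantorStage α 0 \ gCantorSet α).indicator
          fun _ => (1:ℂ)) ξ =
        FourierTransform.fourier ((cantorStage α 0 \ cantorStage α N).indicator
          fun _ => (1:ℂ)) ξ +
        FourierTransform.fourier ((cantorStage α N \ gCantorSet α).indicator
          fun _ => (1:ℂ)) ξ := by
      rw [hsplit, Set.indicator_union_of_disjoint hdisj]
      exact fourierIntegral_add' i1 i2 ξ
    have hhead := fourier_head_le hα hξ N
    have hhead' : (2:ℝ)^N / (π * |ξ|) ≤ 2^N / |ξ| := by
      apply div_le_div_of_nonneg_left (by positivity) habs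
      nlinarith [Real.pi_gt_three]
    have htail : ‖FourierTransform.fourier ((cantorStage α N \ gCantorSet α).indicator
        fun _ => (1:ℂ)) ξ‖ ≤ (2:ℝ)^(N+1) / |ξ| := by
      refine (fourier_norm_le_volume ((measurable_cantorStage N).diff
        measurable_gCantorSet) ξ).trans ?_
      exact ENNReal.toReal_le_of_le_ofReal (by positivity)
        (volume_tail_le' hα hδpos hδ1 hM habs hMN hξE)
    have hF : ‖FourierTransform.fourier ((cantorStage α 0 \ gCantorSet α).indicator
        fun _ => (1:ℂ)) ξ‖ ≤ 3 * (2:ℝ)^N / |ξ| := by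
      rw [hFeq]
      refine (norm_add_le _ _).trans ?_
      have he : (2:ℝ)^(N+1) = 2 * 2^N := by ring
      have : (2:ℝ)^N / |ξ| + 2^(N+1)/|ξ| = 3 * 2^N / |ξ| := by
        rw [he]; ring
      linarith
    -- finish
    have h3 : 3 * (2:ℝ)^N / |ξ| ≤ 3 * (2^(M+2) * (1 + L^(δ/2))) / |ξ| := by
      gcongr
    have hFf := hF.trans h3
    have hsq : ‖FourierTransform.fourier ((cantorStage α 0 \ gCantorSet α).indicator
        fun _ => (1:ℂ)) ξ‖^2 ≤ (3 * (2^(M+2) * (1 + L^(δ/2))) / |ξ|)^2 :=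
      pow_le_pow_left₀ (norm_nonneg _) hFf 2
    refine hsq.trans ?_
    rw [div_pow]
    gcongr ?_ / _
    have hEsq : (L^(δ/2))^2 = L^δ := by
      rw [sq, ← Real.rpow_add hLpos]
      norm_num
    have hLp : 0 ≤ L^(δ/2) := Real.rpow_nonneg hL0 _
    have hpowsq : ((2:ℝ)^(M+2))^2 = 4^(M+2) := by
      rw [← pow_mul, mul_comm (M+2) 2, pow_mul]
      norm_num
    nlinarith [sq_nonneg (L^(δ/2) - 1), pow_pos (show (0:ℝ) < 4 by norm_num) (M+2)]
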